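/- Let q be an odd prime power, Q = {γ in F_{q^2} : γ^{q+1} = 1}, Q₀ = {γ² : γ in Q}, and Q₁ = Q \ Q₀. If q ≡ 1 (mod 4), then Q₀ and Q₁ are maximal independent sets of size (q+1)/2 in the Paley graph P(q²). If q ≡ 3 (mod 4), then Q₀ ∪ {0} and Q₁ ∪ {0} are maximal cliques of size (q+3)/2 in P(q²). -/

import Mathlib

/-- A clique in the Paley graph P(q^2): any two distinct elements differ by a square. -/
def paleyClique {F : Type*} [Field F] (C : Set F) : Prop :=
  ∀ x ∈ C, ∀ y ∈ C, x ≠ y → IsSquare (x - y)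

/-- An independent set in the Paley graph P(q^2). -/
def paleyIndep {F : Type*} [Field F] (C : Set F) : Prop :=
  ∀ x ∈ C, ∀ y ∈ C, x ≠ y → ¬ IsSquare (x - y)

/-- A maximal clique in the Paley graph P(q^2). -/
def maxPaleyClique {F : Type*} [Field F] (C : Set F) : Prop :=
  paleyClique C ∧ ∀ C' : Set F, paleyClique C' → C ⊆ C' → C' = C

/-- A maximal independent set in the Paley graph P(q^2). -/
def maxPaleyIndep {F : Type*} [Field F] (C : Set F) : Prop :=
  paleyIndep C ∧ ∀ C' : Set F, paleyIndep C' → C ⊆ C' → C' = C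



open Finset Polynomial

namespace PaleyAux

variable {F : Type*} [Field F] [Fintype F] [DecidableEq F]

lemma card_pow_le {j : ℕ} (hj : j ≠ 0) (c : F) :
    (Finset.univ.filter fun x : F => x ^ j = c).card ≤ j := by
  have hsub : (Finset.univ.filter fun x : F => x ^ j = c)
      ⊆ (X ^ j - C c : F[X]).roots.toFinset := by
    intro x hx
    rw [Finset.mem_filter] at hx
    rw [Multiset.mem_toFinset, mem_roots (X_pow_sub_C_ne_zero (Nat.pos_of_ne_zero hj) c)]
    simp [IsRoot, hx.2, sub_eq_zero]
  calc (Finset.univ.filter fun x : F => x ^ j = c).card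
      ≤ (X ^ j - C c : F[X]).roots.toFinset.card := Finset.card_le_card hsub
    _ ≤ Multiset.card (X ^ j - C c : F[X]).roots := Multiset.toFinset_card_le _
    _ ≤ j := le_trans (X ^ j - C c : F[X]).card_roots' (le_of_eq natDegree_X_pow_sub_C)

lemma card_pow_eq {m : ℕ} (hm : m ≠ 0) (hdvd : m ∣ Fintype.card F - 1) :
    (Finset.univ.filter fun x : F => x ^ m = 1).card = m := by
  obtain ⟨c, hc⟩ := hdvd
  set N := Fintype.card F - 1 with hN
  have hN0 : N ≠ 0 := by
    have := Fintype.one_lt_card (α := F)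
    omega
  have hmN : m ≤ N := by
    rcases Nat.eq_zero_or_pos c with rfl | hc0
    · omega
    · calc m = m * 1 := (mul_one m).symm
        _ ≤ m * c := Nat.mul_le_mul_left m hc0
        _ = N := hc.symm
  have hdvdP : (X ^ m - C 1 : F[X]) ∣ X ^ N - C 1 := by
    have h := sub_dvd_pow_sub_pow (X ^ m : F[X]) (C 1) c
    simpa [← pow_mul, ← hc, ← C_pow, one_pow] using h
  obtain ⟨P₂, hP₂⟩ := hdvdP
  have hPne : (X ^ m - C 1 : F[X]) ≠ 0 := X_pow_sub_C_ne_zero (Nat.pos_of_ne_zero hm) 1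
  have hNne : (X ^ N - C 1 : F[X]) ≠ 0 := X_pow_sub_C_ne_zero (Nat.pos_of_ne_zero hN0) 1
  have hP₂ne : P₂ ≠ 0 := by
    rintro rfl
    rw [mul_zero] at hP₂
    exact hNne hP₂
  have hdeg : natDegree P₂ = N - m := by
    have h1 : natDegree (X ^ N - C 1 : F[X]) = N := natDegree_X_pow_sub_C
    have h2 : natDegree (X ^ m - C 1 : F[X]) = m := natDegree_X_pow_sub_C
    rw [hP₂, natDegree_mul hPne hP₂ne, h2] at h1
    omega
  have hfe : (Finset.univ.filter fun x : F => x ^ m = 1)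
      = (X ^ m - C 1 : F[X]).roots.toFinset := by
    ext x
    rw [Finset.mem_filter, Multiset.mem_toFinset, mem_roots hPne]
    simp [IsRoot, sub_eq_zero]
  -- lower bound
  have hsub : (Finset.univ.filter fun x : F => x ≠ 0)
      ⊆ (X ^ N - C 1 : F[X]).roots.toFinset := by
    intro x hx
    rw [Finset.mem_filter] at hx
    rw [Multiset.mem_toFinset, mem_roots hNne]
    have := FiniteField.pow_card_sub_one_eq_one x hx.2
    simp [IsRoot, sub_eq_zero, ← hN, this]
    exact this
  have hcard1 : (Finset.univ.filter fun x : F => x ≠ 0).card = N := by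
    rw [Finset.filter_ne', Finset.card_erase_of_mem (Finset.mem_univ 0), Finset.card_univ]
  have hle : N ≤ (X ^ m - C 1 : F[X]).roots.toFinset.card + (N - m) := by
    have h1 : N ≤ (X ^ N - C 1 : F[X]).roots.toFinset.card := by
      have := Finset.card_le_card hsub
      rw [hcard1] at this
      exact this
    have h2 : (X ^ N - C 1 : F[X]).roots.toFinset
        ⊆ (X ^ m - C 1 : F[X]).roots.toFinset ∪ P₂.roots.toFinset := by
      rw [hP₂, roots_mul (hP₂ ▸ hNne), Multiset.toFinset_add]
    have h3 : ((X ^ m - C 1 : F[X]).roots.toFinset ∪ P₂.roots.toFinset).card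
        ≤ (X ^ m - C 1 : F[X]).roots.toFinset.card + P₂.roots.toFinset.card :=
      Finset.card_union_le _ _
    have h4 : P₂.roots.toFinset.card ≤ N - m := by
      calc P₂.roots.toFinset.card ≤ Multiset.card P₂.roots := Multiset.toFinset_card_le _
        _ ≤ natDegree P₂ := P₂.card_roots'
        _ = N - m := hdeg
    have := Finset.card_le_card h2
    omega
  have hub : (Finset.univ.filter fun x : F => x ^ m = 1).card ≤ m := card_pow_le hm 1
  rw [hfe]
  rw [hfe] at hub
  omega

lemma sqrt_exists {m : ℕ} (hm : m ≠ 0) (h2m : 2 * m ∣ Fintype.card F - 1) {a : F}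
    (ha : a ^ m = 1) : ∃ σ : F, σ ^ (2 * m) = 1 ∧ σ ^ 2 = a := by
  set A := Finset.univ.filter fun x : F => x ^ (2 * m) = 1 with hA
  set B := Finset.univ.filter fun x : F => x ^ m = 1 with hB
  have hAc : A.card = 2 * m := card_pow_eq (by omega) h2m
  have hBc : B.card = m := card_pow_eq hm (dvd_trans ⟨2, by ring⟩ h2m)
  have himg : A.image (fun x => x ^ 2) ⊆ B := by
    intro y hy
    obtain ⟨x, hx, rfl⟩ := Finset.mem_image.mp hy
    rw [hA, Finset.mem_filter] at hx
    rw [hB, Finset.mem_filter]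
    refine ⟨Finset.mem_univ _, ?_⟩
    rw [← pow_mul]
    exact hx.2
  have hfib : ∀ b ∈ A.image (fun x => x ^ 2), (A.filter fun x => x ^ 2 = b).card ≤ 2 := by
    intro b _
    have hsub : (A.filter fun x => x ^ 2 = b) ⊆ Finset.univ.filter fun x : F => x ^ 2 = b := by
      intro x hx
      rw [Finset.mem_filter] at hx ⊢
      exact ⟨Finset.mem_univ _, hx.2⟩
    exact le_trans (Finset.card_le_card hsub) (card_pow_le two_ne_zero b)
  have hle := Finset.card_le_mul_card_image A 2 hfib
  have heq : A.image (fun x => x ^ 2) = B := by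
    apply Finset.eq_of_subset_of_card_le himg
    omega
  have haB : a ∈ B := by rw [hB, Finset.mem_filter]; exact ⟨Finset.mem_univ _, ha⟩
  rw [← heq] at haB
  obtain ⟨σ, hσA, hσ2⟩ := Finset.mem_image.mp haB
  rw [hA, Finset.mem_filter] at hσA
  exact ⟨σ, hσA.2, hσ2⟩

end PaleyAux

namespace PaleyAux

structure Ctx (q k : ℕ) (F : Type*) [Field F] [Fintype F] : Prop where
  hk : q = 2 * k + 1
  hk1 : 1 ≤ k
  hcard : Fintype.card F = q ^ 2
  hfS : ∀ y z : F, (y - z) ^ q = y ^ q - z ^ q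
  hfA : ∀ y z : F, (y + z) ^ q = y ^ q + z ^ q
  hne : (-1 : F) ≠ 1

namespace Ctx

variable {q k : ℕ} {F : Type*} [Field F] [Fintype F] (ctx : Ctx q k F)
include ctx
set_option linter.unusedSectionVars false

lemma hq2 : q ^ 2 = 2 * (k * (q + 1)) + 1 := by rw [ctx.hk]; ring

lemma pow_sub_one {z : F} (hz : z ≠ 0) : z ^ (q ^ 2 - 1) = 1 := by
  rw [← ctx.hcard]; exact FiniteField.pow_card_sub_one_eq_one z hz

lemma chi_pm {z : F} (hz : z ≠ 0) : z ^ (k * (q + 1)) = 1 ∨ z ^ (k * (q + 1)) = -1 := by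
  have h2 : z ^ (2 * (k * (q + 1))) = 1 := by
    have h3 : q ^ 2 - 1 = 2 * (k * (q + 1)) := by have := ctx.hq2; omega
    rw [← h3]; exact ctx.pow_sub_one hz
  have h3 : (z ^ (k * (q + 1))) ^ 2 = 1 := by rw [← pow_mul, mul_comm]; exact h2
  have h4 : (z ^ (k * (q + 1)) - 1) * (z ^ (k * (q + 1)) + 1) = 0 := by linear_combination h3
  rcases mul_eq_zero.mp h4 with h | h
  · left; linear_combination h
  · right; linear_combination h

lemma ringChar_ne_two : ringChar F ≠ 2 := by
  intro h
  have h2 := FiniteField.even_card_iff_char_two.mp h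
  rw [ctx.hcard] at h2
  have := ctx.hq2
  omega

lemma chi_sq_iff {z : F} (hz : z ≠ 0) : IsSquare z ↔ z ^ (k * (q + 1)) = 1 := by
  have h1 := FiniteField.isSquare_iff ctx.ringChar_ne_two hz
  have h2 : Fintype.card F / 2 = k * (q + 1) := by
    rw [ctx.hcard]
    have := ctx.hq2
    omega
  rw [h2] at h1
  exact h1

lemma chi_nonsq_iff {z : F} (hz : z ≠ 0) : ¬IsSquare z ↔ z ^ (k * (q + 1)) = -1 := by
  constructor
  · intro h
    rcases ctx.chi_pm hz with h1 | h1
    · exact absurd ((ctx.chi_sq_iff hz).mpr h1) h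
    · exact h1
  · intro h hS
    rw [ctx.chi_sq_iff hz] at hS
    rw [hS] at h
    exact ctx.hne h.symm

lemma mem_Q_ne_zero {γ : F} (hγ : γ ^ (q + 1) = 1) : γ ≠ 0 := by
  rintro rfl
  rw [zero_pow (by omega : q + 1 ≠ 0)] at hγ
  exact zero_ne_one hγ

lemma chi_Q {γ : F} (hγ : γ ^ (q + 1) = 1) : γ ^ (k * (q + 1)) = 1 := by
  rw [mul_comm, pow_mul, hγ, one_pow]

lemma even_e : Even (k * (q + 1)) := ⟨k * (k + 1), by rw [ctx.hk]; ring⟩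

lemma isSquare_neg {z : F} (hz : IsSquare z) : IsSquare (-z) := by
  rcases eq_or_ne z 0 with rfl | h0
  · simpa using hz
  · rw [ctx.chi_sq_iff (neg_ne_zero.mpr h0), Even.neg_pow ctx.even_e]
    exact (ctx.chi_sq_iff h0).mp hz

lemma sign_lemma {γ δ : F} (hγ : γ ^ (q + 1) = 1) (hδ : δ ^ (q + 1) = 1) (hnd : γ ≠ δ) :
    (γ - δ) ^ (k * (q + 1)) = (-1) ^ (k + 1) * (γ * δ) ^ (k + 1) := by
  have hγq : γ ^ q * γ = 1 := by rw [← pow_succ]; exact hγ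
  have hδq : δ ^ q * δ = 1 := by rw [← pow_succ]; exact hδ
  have hw0 : γ - δ ≠ 0 := sub_ne_zero.mpr hnd
  have key : (γ - δ) ^ q * (γ * δ) = -(γ - δ) := by
    rw [ctx.hfS]
    linear_combination δ * hγq - γ * hδq
  have key1 : ((γ - δ) ^ q) ^ (k + 1) * (γ * δ) ^ (k + 1) = (-(γ - δ)) ^ (k + 1) := by
    rw [← mul_pow, key]
  have hgd : (γ * δ) ^ (k + 1) * (γ * δ) ^ (k + 1) = 1 := by
    rw [← pow_add]
    have h1 : (k + 1) + (k + 1) = q + 1 := by have := ctx.hk; omega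
    rw [h1, mul_pow, hγ, hδ, one_mul]
  have key3 : ((γ - δ) ^ q) ^ (k + 1) = (-(γ - δ)) ^ (k + 1) * (γ * δ) ^ (k + 1) := by
    calc ((γ - δ) ^ q) ^ (k + 1)
        = ((γ - δ) ^ q) ^ (k + 1) * ((γ * δ) ^ (k + 1) * (γ * δ) ^ (k + 1)) := by
          rw [hgd, mul_one]
      _ = (((γ - δ) ^ q) ^ (k + 1) * (γ * δ) ^ (k + 1)) * (γ * δ) ^ (k + 1) := by ring
      _ = (-(γ - δ)) ^ (k + 1) * (γ * δ) ^ (k + 1) := by rw [key1]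
  have hqk : q * (k + 1) = (k + 1) + k * (q + 1) := by rw [ctx.hk]; ring
  have main : (γ - δ) ^ (k + 1) * (γ - δ) ^ (k * (q + 1))
      = (γ - δ) ^ (k + 1) * ((-1) ^ (k + 1) * (γ * δ) ^ (k + 1)) := by
    calc (γ - δ) ^ (k + 1) * (γ - δ) ^ (k * (q + 1))
        = (γ - δ) ^ ((k + 1) + k * (q + 1)) := (pow_add _ _ _).symm
      _ = ((γ - δ) ^ q) ^ (k + 1) := by rw [← hqk, pow_mul]
      _ = (-(γ - δ)) ^ (k + 1) * (γ * δ) ^ (k + 1) := key3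
      _ = (γ - δ) ^ (k + 1) * ((-1) ^ (k + 1) * (γ * δ) ^ (k + 1)) := by
          rw [neg_pow]; ring
  exact mul_left_cancel₀ (pow_ne_zero _ hw0) main

variable [DecidableEq F]

lemma card_C (ε : F) (hε : ε = 1 ∨ ε = -1) :
    (Finset.univ.filter fun x : F => x ^ (q + 1) = 1 ∧ x ^ (k + 1) = ε).card = k + 1 := by
  have hq2 := ctx.hq2
  have hqk := ctx.hk
  have hQcard : (Finset.univ.filter fun x : F => x ^ (q + 1) = 1).card = q + 1 := by
    apply PaleyAux.card_pow_eq (by omega)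
    rw [ctx.hcard]
    have hexp : q ^ 2 = (q + 1) * (2 * k) + 1 := by rw [ctx.hk]; ring
    exact ⟨2 * k, by omega⟩
  have h1card : (Finset.univ.filter fun x : F => x ^ (k + 1) = 1).card = k + 1 := by
    apply PaleyAux.card_pow_eq (by omega)
    rw [ctx.hcard]
    have hexp : q ^ 2 = (k + 1) * (4 * k) + 1 := by rw [ctx.hk]; ring
    exact ⟨4 * k, by omega⟩
  have hC1 : (Finset.univ.filter fun x : F => x ^ (q + 1) = 1 ∧ x ^ (k + 1) = 1)
      = Finset.univ.filter fun x : F => x ^ (k + 1) = 1 := by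
    ext x
    simp only [Finset.mem_filter, Finset.mem_univ, true_and, and_iff_right_iff_imp]
    intro h
    rw [show q + 1 = (k + 1) * 2 from by omega, pow_mul, h, one_pow]
  have hdich : ∀ x : F, x ^ (q + 1) = 1 → x ^ (k + 1) = 1 ∨ x ^ (k + 1) = -1 := by
    intro x hx
    have hsq : (x ^ (k + 1)) ^ 2 = 1 := by
      rw [← pow_mul, show (k + 1) * 2 = q + 1 from by omega, hx]
    have h4 : (x ^ (k + 1) - 1) * (x ^ (k + 1) + 1) = 0 := by linear_combination hsq
    rcases mul_eq_zero.mp h4 with h | h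
    · left; linear_combination h
    · right; linear_combination h
  have hsplit : (Finset.univ.filter fun x : F => x ^ (q + 1) = 1)
      = (Finset.univ.filter fun x : F => x ^ (q + 1) = 1 ∧ x ^ (k + 1) = 1)
        ∪ (Finset.univ.filter fun x : F => x ^ (q + 1) = 1 ∧ x ^ (k + 1) = -1) := by
    ext x
    simp only [Finset.mem_filter, Finset.mem_univ, true_and, Finset.mem_union]
    constructor
    · intro h
      rcases hdich x h with h1 | h1
      · exact Or.inl ⟨h, h1⟩
      · exact Or.inr ⟨h, h1⟩
    · rintro (⟨h, _⟩ | ⟨h, _⟩) <;> exact h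
  have hdisj : Disjoint
      (Finset.univ.filter fun x : F => x ^ (q + 1) = 1 ∧ x ^ (k + 1) = 1)
      (Finset.univ.filter fun x : F => x ^ (q + 1) = 1 ∧ x ^ (k + 1) = -1) := by
    rw [Finset.disjoint_left]
    intro x hx hx'
    rw [Finset.mem_filter] at hx hx'
    rw [hx.2.2] at hx'
    exact ctx.hne hx'.2.2.symm
  have hcards := hsplit ▸ hQcard
  rw [Finset.card_union_of_disjoint hdisj, hC1, h1card] at hcards
  rcases hε with rfl | rfl
  · rw [hC1]; exact h1card
  · omega

end Ctx
end PaleyAux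

namespace PaleyAux
namespace Ctx
variable {q k : ℕ} {F : Type*} [Field F] [Fintype F] (ctx : Ctx q k F)
include ctx
set_option linter.unusedSectionVars false
variable [DecidableEq F]

lemma eps_facts {ε : F} (hε : ε = 1 ∨ ε = -1) :
    ε ^ 2 = 1 ∧ ε ≠ 0 ∧ -ε ≠ ε := by
  have h2 : (2 : F) ≠ 0 := by
    intro h2
    exact ctx.hne (by linear_combination -h2)
  rcases hε with rfl | rfl
  · refine ⟨one_pow 2, one_ne_zero, fun h => ctx.hne h⟩
  · refine ⟨neg_one_sq, by simp, fun h => ?_⟩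
    exact ctx.hne (by linear_combination -h)

lemma dich {ε : F} (hε : ε = 1 ∨ ε = -1) {x : F} (hx : x ^ (q + 1) = 1) :
    x ^ (k + 1) = ε ∨ x ^ (k + 1) = -ε := by
  obtain ⟨hεsq, -, -⟩ := ctx.eps_facts hε
  have hsq : (x ^ (k + 1)) ^ 2 = 1 := by
    rw [← pow_mul, show (k + 1) * 2 = q + 1 from by have := ctx.hk; omega, hx]
  have h4 : (x ^ (k + 1) - ε) * (x ^ (k + 1) + ε) = 0 := by linear_combination hsq - hεsq
  rcases mul_eq_zero.mp h4 with h | h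
  · left; linear_combination h
  · right; linear_combination h

lemma indep_max (hodd : Odd (k + 1)) (ε : F) (hε : ε = 1 ∨ ε = -1) :
    maxPaleyIndep {x : F | x ^ (q + 1) = 1 ∧ x ^ (k + 1) = ε} := by
  classical
  obtain ⟨hεsq, hε0, hεε⟩ := ctx.eps_facts hε
  have hqk := ctx.hk
  have hk1 := ctx.hk1
  set C : Set F := {x : F | x ^ (q + 1) = 1 ∧ x ^ (k + 1) = ε} with hCdef
  have hmemC : ∀ x : F, x ∈ C ↔ x ^ (q + 1) = 1 ∧ x ^ (k + 1) = ε := fun x => Iff.rfl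
  -- independence
  have hind : paleyIndep C := by
    intro x hx y hy hxy
    rw [hmemC] at hx hy
    have hchi : (x - y) ^ (k * (q + 1)) = -1 := by
      rw [ctx.sign_lemma hx.1 hy.1 hxy, mul_pow, hx.2, hy.2, hodd.neg_one_pow]
      linear_combination -hεsq
    exact (ctx.chi_nonsq_iff (sub_ne_zero.mpr hxy)).mpr hchi
  refine ⟨hind, ?_⟩
  intro C' hC' hsub
  apply Set.Subset.antisymm _ hsub
  intro x hxC'
  by_contra hxn
  have hεC : ε ∈ C := by
    rw [hmemC]
    constructor
    · rw [show q + 1 = 2 * (k + 1) from by omega, pow_mul, hεsq, one_pow]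
    · rcases hε with rfl | rfl
      · rw [one_pow]
      · exact hodd.neg_one_pow
  have hεC' : ε ∈ C' := hsub hεC
  by_cases hxQ : x ^ (q + 1) = 1
  · rcases ctx.dich hε hxQ with h | h
    · exact hxn ⟨hxQ, h⟩
    · have hxε : x ≠ ε := by
        intro h'
        rw [h'] at h
        rw [hεC.2] at h
        exact hεε h.symm
      have hchi : (x - ε) ^ (k * (q + 1)) = 1 := by
        rw [ctx.sign_lemma hxQ hεC.1 hxε, mul_pow, h, hεC.2, hodd.neg_one_pow]
        linear_combination hεsq
      exact hC' x hxC' ε hεC' hxε ((ctx.chi_sq_iff (sub_ne_zero.mpr hxε)).mpr hchi)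
  · by_cases hx0 : x = 0
    · subst hx0
      have h0ε : (0 : F) ≠ ε := Ne.symm hε0
      have hchi : (0 - ε) ^ (k * (q + 1)) = 1 := by
        rw [zero_sub, Even.neg_pow ctx.even_e,
          show k * (q + 1) = 2 * (k * (k + 1)) from by rw [ctx.hk]; ring, pow_mul, hεsq, one_pow]
      exact hC' 0 hxC' ε hεC' h0ε
        ((ctx.chi_sq_iff (by rw [zero_sub]; exact neg_ne_zero.mpr hε0)).mpr hchi)
    · -- x outside Q ∪ {0}
      have key : ∀ τ η : F, τ ≠ 0 → τ ^ q = τ → η ∈ C → x = τ * η → False := by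
        intro τ η hτ0 hτq hηC hxτη
        have hxη : x ≠ η := fun h => hxn (h ▸ hηC)
        have hτ1 : τ ≠ 1 := fun h => hxη (by rw [hxτη, h, one_mul])
        have hτm0 : τ - 1 ≠ 0 := sub_ne_zero.mpr hτ1
        have hτpow : (τ - 1) ^ (2 * k) = 1 := by
          have h1 : (τ - 1) ^ q = τ - 1 := by
            have := ctx.hfS τ 1
            rw [one_pow] at this
            rw [this, hτq]
          have h2 : (τ - 1) ^ (2 * k) * (τ - 1) = 1 * (τ - 1) := by
            rw [← pow_succ, show 2 * k + 1 = q from hqk.symm, h1, one_mul]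
          exact mul_right_cancel₀ hτm0 h2
        have hA : (τ - 1) ^ (k * (q + 1)) = 1 := by
          rw [show k * (q + 1) = 2 * k * (k + 1) from by rw [ctx.hk]; ring, pow_mul, hτpow,
            one_pow]
        have hchi : (x - η) ^ (k * (q + 1)) = 1 := by
          have hfact : x - η = (τ - 1) * η := by rw [hxτη]; ring
          rw [hfact, mul_pow, hA, ctx.chi_Q hηC.1, one_mul]
        exact hC' x hxC' η (hsub hηC) hxη
          ((ctx.chi_sq_iff (sub_ne_zero.mpr hxη)).mpr hchi)
      rcases ctx.chi_pm hx0 with hx1 | hxm1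
      · -- χ(x) = 1 : write x = τ * η
        have hak : (x ^ (q + 1)) ^ k = 1 := by
          rw [← pow_mul, mul_comm (q + 1) k]; exact hx1
        have h2k : 2 * k ∣ Fintype.card F - 1 := by
          rw [ctx.hcard]
          have hexp : q ^ 2 = 2 * k * (q + 1) + 1 := by rw [ctx.hk]; ring
          exact ⟨q + 1, by omega⟩
        obtain ⟨σ, hσ1, hσ2⟩ := PaleyAux.sqrt_exists (m := k) (by omega) h2k hak
        have hσ0 : σ ≠ 0 := by
          intro h'
          rw [h'] at hσ2
          rw [zero_pow two_ne_zero] at hσ2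
          exact pow_ne_zero (q + 1) hx0 hσ2.symm
        have hσq : σ ^ q = σ := by
          rw [show q = 2 * k + 1 from hqk, pow_succ, hσ1, one_mul]
        set u := x * σ⁻¹ with hu
        have hu0 : u ≠ 0 := mul_ne_zero hx0 (inv_ne_zero hσ0)
        have hσq1 : σ ^ (q + 1) = x ^ (q + 1) := by
          conv_lhs => rw [show q + 1 = 2 * k + 2 from by omega]
          rw [pow_add, hσ1, one_mul, hσ2]
        have huQ : u ^ (q + 1) = 1 := by
          rw [hu, mul_pow, inv_pow, hσq1]
          exact mul_inv_cancel₀ (pow_ne_zero _ hx0)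
        have hxu : x = σ * u := by
          rw [hu]
          field_simp
        rcases ctx.dich hε huQ with huε | huε
        · exact key σ u hσ0 hσq ⟨huQ, huε⟩ hxu
        · refine key (-σ) (-u) (neg_ne_zero.mpr hσ0) ?_ ⟨?_, ?_⟩ ?_
          · rw [Odd.neg_pow ⟨k, by omega⟩, hσq]
          · rw [Even.neg_pow ⟨k + 1, by omega⟩, huQ]
          · rw [Odd.neg_pow hodd, huε, neg_neg]
          · rw [neg_mul_neg]
            exact hxu
      · -- χ(x) = -1 : pigeonhole
        set Cf := Finset.univ.filter
          (fun γ : F => γ ^ (q + 1) = 1 ∧ γ ^ (k + 1) = ε) with hCfdef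
        have hCfcard : Cf.card = k + 1 := ctx.card_C ε hε
        set g : F → F := fun γ => (x - γ) ^ (q + 1) with hg
        have hval : ∀ γ ∈ Cf, (g γ) ^ k = -1 := by
          intro γ hγ
          obtain ⟨hγQ, hγε⟩ := (Finset.mem_filter.mp hγ).2
          have hxγ : x ≠ γ := fun h' => hxQ (h' ▸ hγQ)
          have hns : ¬IsSquare (x - γ) := hC' x hxC' γ (hsub ⟨hγQ, hγε⟩) hxγ
          have hchi := (ctx.chi_nonsq_iff (sub_ne_zero.mpr hxγ)).mp hns
          show ((x - γ) ^ (q + 1)) ^ k = -1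
          rw [← pow_mul, mul_comm (q + 1) k]
          exact hchi
        have hinj : Set.InjOn g Cf := by
          intro γ hγmem γ' hγ'mem hgg
          by_contra hne'
          obtain ⟨hγQ, hγε⟩ := (Finset.mem_filter.mp (Finset.mem_coe.mp hγmem)).2
          obtain ⟨hγ'Q, hγ'ε⟩ := (Finset.mem_filter.mp (Finset.mem_coe.mp hγ'mem)).2
          have hγq : γ ^ q * γ = 1 := by rw [← pow_succ]; exact hγQ
          have hγ'q : γ' ^ q * γ' = 1 := by rw [← pow_succ]; exact hγ'Q
          have hE : (x ^ q - γ ^ q) * (x - γ) = (x ^ q - γ' ^ q) * (x - γ') := by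
            have e1 : (x - γ) ^ (q + 1) = (x ^ q - γ ^ q) * (x - γ) := by
              rw [pow_succ, ctx.hfS]
            have e2 : (x - γ') ^ (q + 1) = (x ^ q - γ' ^ q) * (x - γ') := by
              rw [pow_succ, ctx.hfS]
            rw [← e1, ← e2]
            exact hgg
          have hkey : (γ' - γ) * (x - x ^ q * (γ * γ')) = 0 := by
            linear_combination (-(γ * γ')) * hE + (γ * γ' - x * γ') * hγq
              + (x * γ - γ * γ') * hγ'q
          rcases mul_eq_zero.mp hkey with h' | h'
          · exact hne' (sub_eq_zero.mp h').symm
          · have hxx : x = x ^ q * (γ * γ') := by linear_combination h'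
            have hgg1 : (γ * γ') ^ (k + 1) = 1 := by
              rw [mul_pow, hγε, hγ'ε]
              linear_combination hεsq
            have h1 : x ^ (k + 1) = x ^ (k + 1) * x ^ (k * (q + 1)) := by
              calc x ^ (k + 1) = (x ^ q * (γ * γ')) ^ (k + 1) := by rw [← hxx]
                _ = (x ^ q) ^ (k + 1) * (γ * γ') ^ (k + 1) := mul_pow _ _ _
                _ = (x ^ q) ^ (k + 1) := by rw [hgg1, mul_one]
                _ = x ^ (q * (k + 1)) := (pow_mul x q (k + 1)).symm
                _ = x ^ ((k + 1) + k * (q + 1)) := by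
                    rw [show q * (k + 1) = (k + 1) + k * (q + 1) from by rw [ctx.hk]; ring]
                _ = x ^ (k + 1) * x ^ (k * (q + 1)) := pow_add _ _ _
            have h2 : (1 : F) = x ^ (k * (q + 1)) :=
              mul_left_cancel₀ (pow_ne_zero (k + 1) hx0) (by rw [mul_one]; exact h1)
            rw [hxm1] at h2
            exact ctx.hne h2.symm
        have himage : Cf.image g ⊆ Finset.univ.filter (fun y : F => y ^ k = -1) := by
          intro y hy
          obtain ⟨γ, hγ, rfl⟩ := Finset.mem_image.mp hy
          rw [Finset.mem_filter]
          exact ⟨Finset.mem_univ _, hval γ hγ⟩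
        have hcard2 : (Cf.image g).card = k + 1 := by
          rw [Finset.card_image_of_injOn hinj, hCfcard]
        have hle : (Finset.univ.filter (fun y : F => y ^ k = -1)).card ≤ k :=
          PaleyAux.card_pow_le (j := k) (by omega) (-1)
        have := Finset.card_le_card himage
        omega

end Ctx
end PaleyAux

namespace PaleyAux

lemma pairing {F : Type*} [Field F] [Fintype F] [DecidableEq F] (Bf Af : Finset F)
    (hB : ∀ b ∈ Bf, ∀ b' ∈ Bf, b ≠ b' → IsSquare (b - b'))
    (hA : ∀ a ∈ Af, ∀ a' ∈ Af, a ≠ a' → ¬IsSquare (a - a')) :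
    Bf.card * Af.card ≤ Fintype.card F := by
  have hinj : Set.InjOn (fun p : F × F => p.1 - p.2) ((Bf ×ˢ Af : Finset (F × F)) : Set (F × F)) := by
    rintro ⟨b, a⟩ hba ⟨b', a'⟩ hba' hEq
    simp only [Finset.coe_product, Set.mem_prod, Finset.mem_coe] at hba hba'
    simp only at hEq
    by_cases hbb : b = b'
    · subst hbb
      have : a = a' := by linear_combination -hEq
      rw [this]
    · exfalso
      have h1 : b - b' = a - a' := by linear_combination hEq
      have haa : a ≠ a' := by
        intro h
        apply hbb
        rw [h, sub_self] at h1
        exact sub_eq_zero.mp h1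
      exact hA a hba.2 a' hba'.2 haa (h1 ▸ hB b hba.1 b' hba'.1 hbb)
  calc Bf.card * Af.card = (Bf ×ˢ Af).card := (Finset.card_product _ _).symm
    _ = ((Bf ×ˢ Af).image fun p => p.1 - p.2).card := (Finset.card_image_of_injOn hinj).symm
    _ ≤ Fintype.card F := Finset.card_le_univ _

namespace Ctx
variable {q k : ℕ} {F : Type*} [Field F] [Fintype F] (ctx : Ctx q k F)
include ctx
set_option linter.unusedSectionVars false
variable [DecidableEq F]

lemma clique_max (heven : Even (k + 1)) (K : Subfield F) (hK : Nat.card K = q)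
    (ε : F) (hε : ε = 1 ∨ ε = -1) :
    maxPaleyClique ({x : F | x ^ (q + 1) = 1 ∧ x ^ (k + 1) = ε} ∪ {0}) := by
  classical
  obtain ⟨hεsq, hε0, hεε⟩ := ctx.eps_facts hε
  have hqk := ctx.hk
  have hk1 := ctx.hk1
  set C : Set F := {x : F | x ^ (q + 1) = 1 ∧ x ^ (k + 1) = ε} with hCdef
  have hmemC : ∀ x : F, x ∈ C ↔ x ^ (q + 1) = 1 ∧ x ^ (k + 1) = ε := fun x => Iff.rfl
  have hclique : paleyClique (C ∪ {0}) := by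
    intro x hx y hy hxy
    rcases hx with hxC | hx0
    · rcases hy with hyC | hy0
      · rw [hmemC] at hxC hyC
        have hchi : (x - y) ^ (k * (q + 1)) = 1 := by
          rw [ctx.sign_lemma hxC.1 hyC.1 hxy, mul_pow, hxC.2, hyC.2, heven.neg_one_pow]
          linear_combination hεsq
        exact (ctx.chi_sq_iff (sub_ne_zero.mpr hxy)).mpr hchi
      · rw [Set.mem_singleton_iff] at hy0
        subst hy0
        rw [sub_zero]
        exact (ctx.chi_sq_iff (ctx.mem_Q_ne_zero hxC.1)).mpr (ctx.chi_Q hxC.1)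
    · rw [Set.mem_singleton_iff] at hx0
      subst hx0
      rcases hy with hyC | hy0
      · have h1 : IsSquare y := (ctx.chi_sq_iff (ctx.mem_Q_ne_zero hyC.1)).mpr (ctx.chi_Q hyC.1)
        have h2 := ctx.isSquare_neg h1
        rwa [zero_sub]
      · rw [Set.mem_singleton_iff] at hy0
        exact absurd hy0.symm hxy
  refine ⟨hclique, ?_⟩
  intro C' hC' hsub
  apply Set.Subset.antisymm _ hsub
  intro x hxC'
  by_contra hxn
  have hxnC : x ∉ C := fun h => hxn (Or.inl h)
  have hx0 : x ≠ 0 := fun h => hxn (Or.inr (by rw [h]; exact rfl))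
  have h0C' : (0 : F) ∈ C' := hsub (Or.inr rfl)
  have hCfcard : (Finset.univ.filter
      (fun γ : F => γ ^ (q + 1) = 1 ∧ γ ^ (k + 1) = ε)).card = k + 1 := ctx.card_C ε hε
  obtain ⟨γ₀, hγ₀mem⟩ := Finset.card_pos.mp (by rw [hCfcard]; omega)
  obtain ⟨hγ₀Q, hγ₀ε⟩ := (Finset.mem_filter.mp hγ₀mem).2
  have hγ₀C : γ₀ ∈ C := ⟨hγ₀Q, hγ₀ε⟩
  by_cases hxQ : x ^ (q + 1) = 1
  · rcases ctx.dich hε hxQ with h | h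
    · exact hxnC ⟨hxQ, h⟩
    · have hxγ : x ≠ γ₀ := by
        intro h'
        rw [h', hγ₀ε] at h
        exact hεε h.symm
      have hchi : (x - γ₀) ^ (k * (q + 1)) = -1 := by
        rw [ctx.sign_lemma hxQ hγ₀Q hxγ, mul_pow, h, hγ₀ε, heven.neg_one_pow]
        linear_combination -hεsq
      have hS := hC' x hxC' γ₀ (hsub (Or.inl hγ₀C)) hxγ
      rw [ctx.chi_sq_iff (sub_ne_zero.mpr hxγ)] at hS
      rw [hS] at hchi
      exact ctx.hne hchi.symm
  · -- x outside Q ∪ {0}: build a clique of size q + 2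
    have hxsq : x ^ (k * (q + 1)) = 1 := by
      have h1 := hC' x hxC' 0 h0C' hx0
      rw [sub_zero] at h1
      exact (ctx.chi_sq_iff hx0).mp h1
    set Cfε := Finset.univ.filter
      (fun γ : F => γ ^ (q + 1) = 1 ∧ γ ^ (k + 1) = ε) with hCfε
    set Cf1 := Finset.univ.filter
      (fun γ : F => γ ^ (q + 1) = 1 ∧ γ ^ (k + 1) = 1) with hCf1
    have hC1card : Cf1.card = k + 1 := ctx.card_C 1 (Or.inl rfl)
    set Bf := (Cfε ∪ {0}) ∪ Cf1.image (fun η => x * η) with hBf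
    -- the x-side squares
    have hx_side : ∀ η : F, η ^ (q + 1) = 1 → η ^ (k + 1) = 1 → ∀ b : F, b ∈ C ∪ {0} →
        x * η ≠ b → IsSquare (x * η - b) := by
      intro η hηQ hη1 b hb hneb
      have hη0 : η ≠ 0 := ctx.mem_Q_ne_zero hηQ
      rcases hb with hbC | hb0
      · rw [hmemC] at hbC
        set δ := η ^ q * b with hδ
        have hδQ : δ ^ (q + 1) = 1 := by
          rw [hδ, mul_pow, ← pow_mul, mul_comm q (q + 1), pow_mul, hηQ, one_pow, hbC.1, one_mul]
        have hδε : δ ^ (k + 1) = ε := by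
          rw [hδ, mul_pow, ← pow_mul, mul_comm q (k + 1), pow_mul, hη1, one_pow, one_mul, hbC.2]
        have hδC : δ ∈ C := ⟨hδQ, hδε⟩
        have hxδ : x ≠ δ := fun h => hxQ (by rw [h]; exact hδQ)
        have hSq := hC' x hxC' δ (hsub (Or.inl hδC)) hxδ
        have hSq' : (x - δ) ^ (k * (q + 1)) = 1 :=
          (ctx.chi_sq_iff (sub_ne_zero.mpr hxδ)).mp hSq
        have hη1' : η ^ q * η = 1 := by rw [← pow_succ]; exact hηQ
        have hfact : x * η - b = η * (x - δ) := by
          rw [hδ]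
          linear_combination b * hη1'
        have hchi : (x * η - b) ^ (k * (q + 1)) = 1 := by
          rw [hfact, mul_pow, ctx.chi_Q hηQ, hSq', one_mul]
        exact (ctx.chi_sq_iff (sub_ne_zero.mpr hneb)).mpr hchi
      · rw [Set.mem_singleton_iff] at hb0
        subst hb0
        rw [sub_zero]
        have hchi : (x * η) ^ (k * (q + 1)) = 1 := by
          rw [mul_pow, hxsq, ctx.chi_Q hηQ, one_mul]
        exact (ctx.chi_sq_iff (mul_ne_zero hx0 hη0)).mpr hchi
    have hmemB : ∀ b ∈ Bf, (b ∈ C ∪ {0}) ∨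
        ∃ η : F, η ^ (q + 1) = 1 ∧ η ^ (k + 1) = 1 ∧ b = x * η := by
      intro b hb
      rcases Finset.mem_union.mp hb with hb1 | hb2
      · rcases Finset.mem_union.mp hb1 with hbε | hb0
        · exact Or.inl (Or.inl (Finset.mem_filter.mp hbε).2)
        · exact Or.inl (Or.inr (Finset.mem_singleton.mp hb0))
      · obtain ⟨η, hη, rfl⟩ := Finset.mem_image.mp hb2
        obtain ⟨h1, h2⟩ := (Finset.mem_filter.mp hη).2
        exact Or.inr ⟨η, h1, h2, rfl⟩
    have hBsq : ∀ b ∈ Bf, ∀ b' ∈ Bf, b ≠ b' → IsSquare (b - b') := by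
      intro b hb b' hb' hbb'
      rcases hmemB b hb with hbC | ⟨η, hηQ, hη1, rfl⟩
      · rcases hmemB b' hb' with hb'C | ⟨η', hη'Q, hη'1, rfl⟩
        · exact hclique b hbC b' hb'C hbb'
        · have h1 := hx_side η' hη'Q hη'1 b hbC (Ne.symm hbb')
          have h2 := ctx.isSquare_neg h1
          rwa [neg_sub] at h2
      · rcases hmemB b' hb' with hb'C | ⟨η', hη'Q, hη'1, rfl⟩
        · exact hx_side η hηQ hη1 b' hb'C hbb'
        · have hηη : η ≠ η' := fun h => hbb' (by rw [h])
          have hfact : x * η - x * η' = x * (η - η') := by ring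
          have hchi : (x * η - x * η') ^ (k * (q + 1)) = 1 := by
            rw [hfact, mul_pow, hxsq, one_mul, ctx.sign_lemma hηQ hη'Q hηη, mul_pow, hη1,
              hη'1, heven.neg_one_pow]
            ring
          exact (ctx.chi_sq_iff (sub_ne_zero.mpr hbb')).mpr hchi
    -- cardinality of Bf
    have h0Cfε : (0 : F) ∉ Cfε := by
      rw [hCfε, Finset.mem_filter]
      rintro ⟨-, h1, -⟩
      rw [zero_pow (by omega : q + 1 ≠ 0)] at h1
      exact zero_ne_one h1
    have hdisj1 : Disjoint (Cfε ∪ {0} : Finset F) (Cf1.image fun η => x * η) := by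
      rw [Finset.disjoint_right]
      intro b hb hbmem
      obtain ⟨η, hη, rfl⟩ := Finset.mem_image.mp hb
      obtain ⟨hηQ, -⟩ := (Finset.mem_filter.mp hη).2
      rcases Finset.mem_union.mp hbmem with h1 | h1
      · obtain ⟨h2, -⟩ := (Finset.mem_filter.mp h1).2
        apply hxQ
        rw [mul_pow, hηQ, mul_one] at h2
        exact h2
      · rw [Finset.mem_singleton] at h1
        exact mul_ne_zero hx0 (ctx.mem_Q_ne_zero hηQ) h1
    have hdisj0 : Disjoint Cfε ({0} : Finset F) := by
      rw [Finset.disjoint_right]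
      intro b hb
      rw [Finset.mem_singleton] at hb
      subst hb
      exact h0Cfε
    have hBcard : Bf.card = q + 2 := by
      rw [hBf, Finset.card_union_of_disjoint hdisj1, Finset.card_union_of_disjoint hdisj0,
        Finset.card_singleton,
        Finset.card_image_of_injective _ (mul_right_injective₀ hx0), hCfcard, hC1card]
      omega
    -- the independent set g0 * K
    obtain ⟨g0, hg0⟩ := FiniteField.exists_nonsquare ctx.ringChar_ne_two
    have hg00 : g0 ≠ 0 := by
      intro h
      exact hg0 ⟨0, by rw [h, mul_zero]⟩
    have hg0e : g0 ^ (k * (q + 1)) = -1 := (ctx.chi_nonsq_iff hg00).mp hg0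
    have hKfin : (K : Set F).Finite := Set.toFinite _
    have hKpow : ∀ y : F, y ∈ K → y ≠ 0 → y ^ (2 * k) = 1 := by
      intro y hyK hy0
      haveI : Fintype K := Fintype.ofFinite K
      have hcK : Fintype.card K = q := by rw [← Nat.card_eq_fintype_card]; exact hK
      have h1 : (⟨y, hyK⟩ : K) ≠ 0 := by
        intro h
        exact hy0 (congrArg Subtype.val h)
      have h2 : (⟨y, hyK⟩ : K) ^ (Fintype.card K - 1) = 1 :=
        FiniteField.pow_card_sub_one_eq_one _ h1
      rw [hcK, show q - 1 = 2 * k from by omega] at h2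
      have h3 := congrArg (Subfield.subtype K) h2
      rw [map_pow, map_one] at h3
      exact h3
    set Kf := hKfin.toFinset with hKf
    have hKfcard : Kf.card = q := by
      rw [hKf, ← Set.ncard_eq_toFinset_card (K : Set F) hKfin, ← Nat.card_coe_set_eq]
      simpa using hK
    set Af := Kf.image (fun y => g0 * y) with hAf
    have hAcard : Af.card = q := by
      rw [hAf, Finset.card_image_of_injective _ (mul_right_injective₀ hg00), hKfcard]
    have hAns : ∀ a ∈ Af, ∀ a' ∈ Af, a ≠ a' → ¬IsSquare (a - a') := by
      intro a ha a' ha' haa'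
      obtain ⟨y, hy, rfl⟩ := Finset.mem_image.mp ha
      obtain ⟨y', hy', rfl⟩ := Finset.mem_image.mp ha'
      rw [hKf, Set.Finite.mem_toFinset] at hy hy'
      have hyy' : y ≠ y' := fun h => haa' (by rw [h])
      have hsubK : y - y' ∈ K := K.sub_mem hy hy'
      have hsub0 : y - y' ≠ 0 := sub_ne_zero.mpr hyy'
      have h2k : (y - y') ^ (2 * k) = 1 := hKpow _ hsubK hsub0
      have hchi : (g0 * y - g0 * y') ^ (k * (q + 1)) = -1 := by
        have hfact : g0 * y - g0 * y' = g0 * (y - y') := by ring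
        rw [hfact, mul_pow, hg0e,
          show k * (q + 1) = 2 * k * (k + 1) from by rw [ctx.hk]; ring, pow_mul, h2k,
          one_pow, mul_one]
      exact (ctx.chi_nonsq_iff (sub_ne_zero.mpr haa')).mpr hchi
    have hpair := PaleyAux.pairing Bf Af hBsq hAns
    rw [hBcard, hAcard, ctx.hcard] at hpair
    have hqq : q ^ 2 = q * q := sq q
    have h1 : (q + 2) * q = q * q + 2 * q := by ring
    omega

end Ctx
end PaleyAux

namespace PaleyAux
namespace Ctx
variable {q k : ℕ} {F : Type*} [Field F] [Fintype F] (ctx : Ctx q k F)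
include ctx
set_option linter.unusedSectionVars false
variable [DecidableEq F]

lemma ncard_C (ε : F) (hε : ε = 1 ∨ ε = -1) :
    {x : F | x ^ (q + 1) = 1 ∧ x ^ (k + 1) = ε}.ncard = k + 1 := by
  classical
  rw [Set.ncard_eq_toFinset_card', Set.toFinset_setOf]
  exact ctx.card_C ε hε

lemma ncard_C0 (ε : F) (hε : ε = 1 ∨ ε = -1) :
    ({x : F | x ^ (q + 1) = 1 ∧ x ^ (k + 1) = ε} ∪ {0} : Set F).ncard = k + 2 := by
  classical
  have h0 : (0 : F) ∉ {x : F | x ^ (q + 1) = 1 ∧ x ^ (k + 1) = ε} := by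
    rintro ⟨h1, -⟩
    rw [zero_pow (by omega : q + 1 ≠ 0)] at h1
    exact zero_ne_one h1
  rw [Set.union_singleton, Set.ncard_insert_of_notMem h0 (Set.toFinite _),
    ctx.ncard_C ε hε]

end Ctx
end PaleyAux


/-- the Q-construction. For q ≡ 1 (mod 4), Q₀ and Q₁ are maximal
independent sets of size (q+1)/2 in P(q²); for q ≡ 3 (mod 4), Q₀ ∪ {0} and
Q₁ ∪ {0} are maximal cliques of size (q+3)/2. -/
theorem stmt_8 (q : ℕ) (hq : Odd q) (hq' : IsPrimePow q)
    (F : Type*) [Field F] (hF : Nat.card F = q ^ 2)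
    (K : Subfield F) (hK : Nat.card K = q)
    (Q Q₀ Q₁ : Set F) (hQ : Q = {γ : F | γ ^ (q + 1) = 1})
    (hQ₀ : Q₀ = (fun γ => γ ^ 2) '' Q) (hQ₁ : Q₁ = Q \ Q₀) :
    (q % 4 = 1 →
      (maxPaleyIndep Q₀ ∧ Q₀.ncard = (q + 1) / 2) ∧
      (maxPaleyIndep Q₁ ∧ Q₁.ncard = (q + 1) / 2)) ∧
    (q % 4 = 3 →
      (maxPaleyClique (Q₀ ∪ {0}) ∧ (Q₀ ∪ {0} : Set F).ncard = (q + 3) / 2) ∧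
      (maxPaleyClique (Q₁ ∪ {0}) ∧ (Q₁ ∪ {0} : Set F).ncard = (q + 3) / 2)) := by
  classical
  obtain ⟨k, hkq⟩ := hq
  have hq2 := hq'.two_le
  have hk1 : 1 ≤ k := by omega
  have hFin : Finite F := Nat.finite_of_card_ne_zero (by
    rw [hF]
    have h : 0 < q ^ 2 := by positivity
    omega)
  letI : Fintype F := Fintype.ofFinite F
  have hcard : Fintype.card F = q ^ 2 := by rw [← Nat.card_eq_fintype_card, hF]
  obtain ⟨p, n, hp, hn, hpn⟩ := hq'
  haveI hfp : Fact p.Prime := ⟨Nat.prime_iff.mpr hp⟩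
  haveI hrcp : CharP F (ringChar F) := ringChar.charP F
  haveI hcharp : CharP F p := by
    have hrp : (ringChar F).Prime := CharP.char_is_prime F (ringChar F)
    obtain ⟨m, hm', hcard'⟩ := FiniteField.card F (ringChar F)
    have h1 : p ∣ ringChar F ^ (m : ℕ) := by
      rw [← hcard', hcard, ← hpn, ← pow_mul]
      exact dvd_pow_self p (by omega)
    have h2 := (Nat.Prime.dvd_of_dvd_pow (Nat.prime_iff.mpr hp)) h1
    have hpr : p = ringChar F :=
      (Nat.prime_dvd_prime_iff_eq (Nat.prime_iff.mpr hp) hrp).mp h2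
    rw [hpr]
    exact hrcp
  have hfS : ∀ y z : F, (y - z) ^ q = y ^ q - z ^ q := by
    intro y z
    rw [← hpn]
    exact sub_pow_char_pow y z n
  have hfA : ∀ y z : F, (y + z) ^ q = y ^ q + z ^ q := by
    intro y z
    rw [← hpn]
    exact add_pow_char_pow y z p n
  have hrne2 : ringChar F ≠ 2 := by
    intro h
    have h2 := FiniteField.even_card_iff_char_two.mp h
    rw [hcard] at h2
    have h3 : q ^ 2 = 2 * (2 * k * k + 2 * k) + 1 := by rw [hkq]; ring
    omega
  have hne : (-1 : F) ≠ 1 := Ring.neg_one_ne_one_of_char_ne_two hrne2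
  have ctx : PaleyAux.Ctx q k F := ⟨hkq, hk1, hcard, hfS, hfA, hne⟩
  have hQ₀C : Q₀ = {x : F | x ^ (q + 1) = 1 ∧ x ^ (k + 1) = 1} := by
    rw [hQ₀, hQ]
    ext x
    simp only [Set.mem_image, Set.mem_setOf_eq]
    constructor
    · rintro ⟨γ, hγ, rfl⟩
      constructor
      · rw [← pow_mul, mul_comm 2 (q + 1), pow_mul, hγ, one_pow]
      · rw [← pow_mul, show 2 * (k + 1) = q + 1 from by omega, hγ]
    · rintro ⟨-, h1⟩
      have h2m : 2 * (k + 1) ∣ Fintype.card F - 1 := by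
        rw [hcard]
        have hexp : q ^ 2 = 2 * (k + 1) * (2 * k) + 1 := by rw [hkq]; ring
        exact ⟨2 * k, by omega⟩
      obtain ⟨σ, hσ1, hσ2⟩ := PaleyAux.sqrt_exists (m := k + 1) (by omega) h2m h1
      exact ⟨σ, by rw [show q + 1 = 2 * (k + 1) from by omega]; exact hσ1, hσ2⟩
  have hQ₁C : Q₁ = {x : F | x ^ (q + 1) = 1 ∧ x ^ (k + 1) = -1} := by
    rw [hQ₁, hQ, hQ₀C]
    ext x
    simp only [Set.mem_diff, Set.mem_setOf_eq]
    constructor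
    · rintro ⟨h1, h2⟩
      refine ⟨h1, ?_⟩
      rcases ctx.dich (Or.inl rfl) h1 with h3 | h3
      · exact absurd ⟨h1, h3⟩ h2
      · simpa using h3
    · rintro ⟨h1, h2⟩
      refine ⟨h1, ?_⟩
      rintro ⟨-, h3⟩
      rw [h3] at h2
      exact hne h2.symm
  constructor
  · intro h4
    have hodd : Odd (k + 1) := by rw [Nat.odd_iff]; omega
    rw [hQ₀C, hQ₁C, show (q + 1) / 2 = k + 1 from by omega]
    exact ⟨⟨ctx.indep_max hodd 1 (Or.inl rfl), ctx.ncard_C 1 (Or.inl rfl)⟩,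
      ⟨ctx.indep_max hodd (-1) (Or.inr rfl), ctx.ncard_C (-1) (Or.inr rfl)⟩⟩
  · intro h4
    have heven : Even (k + 1) := by rw [Nat.even_iff]; omega
    rw [hQ₀C, hQ₁C, show (q + 3) / 2 = k + 2 from by omega]
    exact ⟨⟨ctx.clique_max heven K hK 1 (Or.inl rfl), ctx.ncard_C0 1 (Or.inl rfl)⟩,
      ⟨ctx.clique_max heven K hK (-1) (Or.inr rfl), ctx.ncard_C0 (-1) (Or.inr rfl)⟩⟩
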